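/- Let n ≥ 1, r a fixed unit vector in ℝⁿ, and R a random vector uniformly distributed on the unit sphere of ℝⁿ, independent of r. Then for any γ with 1/√(2πn) < γ < 1, P(⟨r, R⟩ ≥ γ) ≤ 2^((n−1)·(1/2)·log₂(1−γ²)). -/

import Mathlib

open RealInnerProductSpace MeasureTheory Pointwise

private lemma slice_eq_aux (c s : ℝ) (hc : 0 ≤ c) :
    {t : ℝ | c ≤ t ∧ t ^ 2 + s < 1} = Set.Ico c (Real.sqrt (1 - s)) := by
  ext t
  simp only [Set.mem_setOf_eq, Set.mem_Ico]
  constructor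
  · rintro ⟨h1, h2⟩
    exact ⟨h1, (Real.lt_sqrt (hc.trans h1)).2 (by linarith)⟩
  · rintro ⟨h1, h2⟩
    have := (Real.lt_sqrt (hc.trans h1)).1 h2
    exact ⟨h1, by linarith⟩

set_option maxHeartbeats 4000000 in
theorem stmt_19 (n : ℕ) (hn : 1 ≤ n)
    (r : EuclideanSpace ℝ (Fin n)) (hr : ‖r‖ = 1)
    (μ : Measure (Metric.sphere (0 : EuclideanSpace ℝ (Fin n)) 1))
    (hμ : μ = ((volume : Measure (EuclideanSpace ℝ (Fin n))).toSphere Set.univ)⁻¹ •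
        (volume : Measure (EuclideanSpace ℝ (Fin n))).toSphere)
    (γ : ℝ) (hγl : 1 / Real.sqrt (2 * Real.pi * n) < γ) (hγu : γ < 1) :
    μ { x : Metric.sphere (0 : EuclideanSpace ℝ (Fin n)) 1 |
        γ ≤ ⟪r, (x : EuclideanSpace ℝ (Fin n))⟫ }
      ≤ ENNReal.ofReal
          ((2 : ℝ) ^ (((n : ℝ) - 1) * ((1 / 2) * Real.logb 2 (1 - γ ^ 2)))) := by
  obtain ⟨m, rfl⟩ : ∃ m, n = m + 1 := ⟨n - 1, (Nat.succ_pred_eq_of_pos hn).symm⟩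
  have hγ0 : 0 < γ := lt_of_le_of_lt (by positivity) hγl
  have hx : (0 : ℝ) < 1 - γ ^ 2 := by nlinarith
  set β : ℝ := Real.sqrt (1 - γ ^ 2) with hβ
  have hβ0 : 0 < β := Real.sqrt_pos.2 hx
  have hβ2 : β ^ 2 = 1 - γ ^ 2 := Real.sq_sqrt hx.le
  set a : ℝ := γ / β with ha
  have ha0 : 0 ≤ a := by positivity
  have haβ : a * β = γ := div_mul_cancel₀ γ hβ0.ne'
  have ha2 : a ^ 2 * (1 - γ ^ 2) = γ ^ 2 := by
    rw [← hβ2, ha]; field_simp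
  -- orthonormal basis with `b 0 = r`
  obtain ⟨b, hb⟩ : ∃ b : OrthonormalBasis (Fin (m + 1)) ℝ (EuclideanSpace ℝ (Fin (m + 1))),
      b 0 = r := by
    have hcard : Module.finrank ℝ (EuclideanSpace ℝ (Fin (m + 1)))
        = Fintype.card (Fin (m + 1)) := by
      simp [finrank_euclideanSpace_fin]
    have hON : Orthonormal ℝ (Set.restrict {(0 : Fin (m + 1))} (fun _ => r)) := by
      constructor
      · intro i; exact hr
      · intro i j hij
        exact absurd (Subtype.ext (i.2.trans j.2.symm)) hij
    obtain ⟨b, hb⟩ := hON.exists_orthonormalBasis_extension_of_card_eq hcard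
    exact ⟨b, hb 0 rfl⟩
  -- the quadratic form on the last m coordinates
  set q : (Fin m → ℝ) → ℝ := fun z => ∑ i, z i ^ 2 with hq
  have hq0 : ∀ z, 0 ≤ q z := fun z => Finset.sum_nonneg fun i _ => sq_nonneg _
  have hqc : Continuous q := by
    apply continuous_finset_sum
    exact fun i _ => (continuous_apply i).pow 2
  -- the coordinate map
  set Φ : EuclideanSpace ℝ (Fin (m + 1)) → (Fin m → ℝ) × ℝ :=
    fun y => (fun i => b.repr y ((0 : Fin (m + 1)).succAbove i), b.repr y 0) with hΦ
  have hΦmp : MeasurePreserving Φ volume volume := by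
    have h1 : MeasurePreserving (⇑b.repr) (volume : Measure (EuclideanSpace ℝ (Fin (m + 1))))
        volume := b.measurePreserving_repr
    have h2 := EuclideanSpace.volume_preserving_symm_measurableEquiv_toLp (Fin (m + 1))
    have h3 := volume_preserving_piFinSuccAbove (fun _ : Fin (m + 1) => ℝ) 0
    have h4 : MeasurePreserving (Prod.swap : ℝ × (Fin m → ℝ) → (Fin m → ℝ) × ℝ)
        volume volume := by
      rw [Measure.volume_eq_prod, Measure.volume_eq_prod]
      exact Measure.measurePreserving_swap
    exact (h4.comp (h3.comp (h2.comp h1)))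
  -- norm and inner product in coordinates
  have hinner : ∀ y : EuclideanSpace ℝ (Fin (m + 1)), b.repr y 0 = ⟪r, y⟫ := by
    intro y; rw [b.repr_apply_apply, hb]
  have hnorm : ∀ y : EuclideanSpace ℝ (Fin (m + 1)),
      (b.repr y 0) ^ 2 + q (Φ y).1 = ‖y‖ ^ 2 := by
    intro y
    have h1 : ‖y‖ = ‖b.repr y‖ := (b.repr.norm_map y).symm
    have h2 : ‖b.repr y‖ ^ 2 = ∑ i, (b.repr y i) ^ 2 := by
      rw [EuclideanSpace.norm_eq, Real.sq_sqrt (by positivity)]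
      simp [sq_abs]
    rw [h1, h2, Fin.sum_univ_succAbove (fun i => (b.repr y i) ^ 2) 0]
  -- the sets
  set A : Set ((Fin m → ℝ) × ℝ) :=
    {p | a * Real.sqrt (q p.1) ≤ p.2 ∧ p.2 ^ 2 + q p.1 < 1} with hA
  set B : Set ((Fin m → ℝ) × ℝ) := {p | p.2 ^ 2 + q p.1 < 1} with hB
  set H : Set ((Fin m → ℝ) × ℝ) := {p | 0 ≤ p.2 ∧ p.2 ^ 2 + q p.1 < 1} with hH
  set K : Set (EuclideanSpace ℝ (Fin (m + 1))) :=
    {y | ‖y‖ < 1 ∧ γ * ‖y‖ ≤ ⟪r, y⟫} with hK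
  have hAm : MeasurableSet A := by
    have h1 : MeasurableSet {p : (Fin m → ℝ) × ℝ | a * Real.sqrt (q p.1) ≤ p.2} :=
      measurableSet_le
        ((continuous_const.mul ((Real.continuous_sqrt.comp hqc).comp continuous_fst))).measurable
        measurable_snd
    have h2 : MeasurableSet {p : (Fin m → ℝ) × ℝ | p.2 ^ 2 + q p.1 < 1} :=
      measurableSet_lt
        (((continuous_snd.pow 2).add (hqc.comp continuous_fst)).measurable) measurable_const
    exact h1.inter h2
  have hBm : MeasurableSet B :=
    measurableSet_lt
      (((continuous_snd.pow 2).add (hqc.comp continuous_fst)).measurable) measurable_const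
  have hHm : MeasurableSet H :=
    (measurableSet_le measurable_const measurable_snd).inter hBm
  -- K = Φ ⁻¹' A
  have hKA : K = Φ ⁻¹' A := by
    ext y
    have hy := hnorm y
    have hyi := hinner y
    simp only [hK, hA, Set.mem_setOf_eq, Set.mem_preimage]
    set t : ℝ := b.repr y 0 with hts
    set s : ℝ := q (Φ y).1 with hss
    have hs0 : 0 ≤ s := hq0 _
    rw [← hyi, show (Φ y).2 = t from rfl]
    clear_value t s
    constructor
    · rintro ⟨h1, h2⟩
      have ht0 : 0 ≤ t := le_trans (by positivity) h2
      have hsq : γ ^ 2 * ‖y‖ ^ 2 ≤ t ^ 2 := by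
        have := mul_self_le_mul_self (by positivity : (0:ℝ) ≤ γ * ‖y‖) h2
        nlinarith
      constructor
      · have hq2 : a ^ 2 * s ≤ t ^ 2 := by nlinarith [sq_nonneg a]
        calc a * Real.sqrt s
            = Real.sqrt (a ^ 2 * s) := by
              rw [Real.sqrt_mul (sq_nonneg a), Real.sqrt_sq ha0]
          _ ≤ Real.sqrt (t ^ 2) := Real.sqrt_le_sqrt hq2
          _ = t := Real.sqrt_sq ht0
      · nlinarith [norm_nonneg y]
    · rintro ⟨h1, h2⟩
      have ht0 : 0 ≤ t := le_trans (mul_nonneg ha0 (Real.sqrt_nonneg _)) h1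
      have hy1 : ‖y‖ < 1 := by nlinarith [norm_nonneg y]
      refine ⟨hy1, ?_⟩
      have hq2 : a ^ 2 * s ≤ t ^ 2 := by
        have h3 := mul_self_le_mul_self (mul_nonneg ha0 (Real.sqrt_nonneg s)) h1
        have h4 : Real.sqrt s * Real.sqrt s = s := Real.mul_self_sqrt hs0
        nlinarith
      have hγ2 : γ ^ 2 * ‖y‖ ^ 2 ≤ t ^ 2 := by nlinarith [sq_nonneg a, sq_nonneg t]
      calc γ * ‖y‖ = Real.sqrt ((γ * ‖y‖) ^ 2) := (Real.sqrt_sq (by positivity)).symm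
        _ ≤ Real.sqrt (t ^ 2) := by apply Real.sqrt_le_sqrt; nlinarith
        _ = t := Real.sqrt_sq ht0
  -- ball = Φ ⁻¹' B
  have hballB : Metric.ball (0 : EuclideanSpace ℝ (Fin (m + 1))) 1 = Φ ⁻¹' B := by
    ext y
    have hy := hnorm y
    simp only [Metric.mem_ball, dist_zero_right, hB, Set.mem_preimage, Set.mem_setOf_eq]
    constructor
    · intro h; nlinarith [norm_nonneg y]
    · intro h; nlinarith [norm_nonneg y, sq_nonneg (b.repr y 0), hq0 (Φ y).1]
  -- cone inclusion
  set cap : Set (Metric.sphere (0 : EuclideanSpace ℝ (Fin (m + 1))) 1) :=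
    { x | γ ≤ ⟪r, (x : EuclideanSpace ℝ (Fin (m + 1)))⟫ } with hcap
  have hcapm : MeasurableSet cap := by
    apply measurableSet_le measurable_const
    exact (Continuous.inner continuous_const continuous_subtype_val).measurable
  have hcone : Set.Ioo (0 : ℝ) 1 • (Subtype.val '' cap) ⊆ K := by
    rintro w hw
    rw [Set.mem_smul] at hw
    obtain ⟨c, hc, x, hx, rfl⟩ := hw
    obtain ⟨x', hx', rfl⟩ := hx
    have hxn : ‖(x' : EuclideanSpace ℝ (Fin (m + 1)))‖ = 1 := by
      have := x'.2; rwa [mem_sphere_zero_iff_norm] at this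
    obtain ⟨hc0, hc1⟩ := hc
    constructor
    · rw [norm_smul, hxn, mul_one, Real.norm_eq_abs, abs_of_pos hc0]; exact hc1
    · rw [norm_smul, hxn, mul_one, Real.norm_eq_abs, abs_of_pos hc0,
        real_inner_smul_right]
      have hg : γ ≤ ⟪r, (x' : EuclideanSpace ℝ (Fin (m + 1)))⟫ := hx'
      nlinarith
  -- volume of A as an integral
  have hvolA : (volume : Measure ((Fin m → ℝ) × ℝ)) A
      = ∫⁻ z, ENNReal.ofReal (Real.sqrt (1 - q z) - a * Real.sqrt (q z)) := by
    rw [Measure.volume_eq_prod, Measure.prod_apply hAm]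
    refine lintegral_congr fun z => ?_
    have hslice : Prod.mk z ⁻¹' A
        = Set.Ico (a * Real.sqrt (q z)) (Real.sqrt (1 - q z)) := by
      rw [show Prod.mk z ⁻¹' A
          = {t : ℝ | a * Real.sqrt (q z) ≤ t ∧ t ^ 2 + q z < 1} from rfl]
      exact slice_eq_aux _ _ (mul_nonneg ha0 (Real.sqrt_nonneg _))
    rw [hslice, Real.volume_Ico]
  -- volume of H as an integral
  have hvolH : (volume : Measure ((Fin m → ℝ) × ℝ)) H
      = ∫⁻ z, ENNReal.ofReal (Real.sqrt (1 - q z)) := by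
    rw [Measure.volume_eq_prod, Measure.prod_apply hHm]
    refine lintegral_congr fun z => ?_
    have hslice : Prod.mk z ⁻¹' H = Set.Ico 0 (Real.sqrt (1 - q z)) := by
      rw [show Prod.mk z ⁻¹' H
          = {t : ℝ | 0 ≤ t ∧ t ^ 2 + q z < 1} from rfl]
      exact slice_eq_aux 0 (q z) le_rfl
    rw [hslice, Real.volume_Ico, sub_zero]
  -- the integrand
  set F : (Fin m → ℝ) → ENNReal :=
    fun z => ENNReal.ofReal (Real.sqrt (1 - q z) - a * Real.sqrt (q z)) with hF
  have hFm : Measurable F := by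
    apply ENNReal.measurable_ofReal.comp
    exact ((Real.continuous_sqrt.comp (continuous_const.sub hqc)).sub
      (continuous_const.mul (Real.continuous_sqrt.comp hqc))).measurable
  -- scaling
  have hscale : ∫⁻ z, F z = ENNReal.ofReal (β ^ m) * ∫⁻ w, F (β • w) := by
    have hmap : Measure.map (β • ·) (volume : Measure (Fin m → ℝ))
        = ENNReal.ofReal |(β ^ Module.finrank ℝ (Fin m → ℝ))⁻¹| • volume :=
      Measure.map_addHaar_smul volume hβ0.ne'
    have h1 : ∫⁻ w, F (β • w) ∂(volume : Measure (Fin m → ℝ))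
        = ∫⁻ z, F z ∂(Measure.map (β • ·) (volume : Measure (Fin m → ℝ))) :=
      (lintegral_map hFm (measurable_const_smul β)).symm
    rw [h1, hmap, lintegral_smul_measure, smul_eq_mul, Module.finrank_fin_fun, ← mul_assoc,
      abs_of_pos (by positivity), ← ENNReal.ofReal_mul (by positivity),
      mul_inv_cancel₀ (by positivity), ENNReal.ofReal_one, one_mul]
  -- pointwise bound
  have hpt : ∀ w, F (β • w) ≤ ENNReal.ofReal (Real.sqrt (1 - q w)) := by
    intro w
    have hqs : q (β • w) = β ^ 2 * q w := by
      simp only [hq, Pi.smul_apply, smul_eq_mul, mul_pow, Finset.mul_sum]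
    set u : ℝ := Real.sqrt (q w) with hu
    have hu0 : 0 ≤ u := Real.sqrt_nonneg _
    have hu2 : u ^ 2 = q w := Real.sq_sqrt (hq0 _)
    have hsq : Real.sqrt (q (β • w)) = β * u := by
      rw [hqs, Real.sqrt_mul (sq_nonneg β), Real.sqrt_sq hβ0.le, hu]
    have hgoal : Real.sqrt (1 - β ^ 2 * u ^ 2) - γ * u ≤ Real.sqrt (1 - u ^ 2) := by
      by_cases hu1 : u ≤ 1
      · have h0 : 0 ≤ Real.sqrt (1 - u ^ 2) + γ * u := by positivity
        have hsle : 1 - β ^ 2 * u ^ 2 ≤ (Real.sqrt (1 - u ^ 2) + γ * u) ^ 2 := by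
          have h2 : (Real.sqrt (1 - u ^ 2)) ^ 2 = 1 - u ^ 2 :=
            Real.sq_sqrt (by nlinarith)
          have h6 : β ^ 2 * u ^ 2 = (1 - γ ^ 2) * u ^ 2 := by rw [hβ2]
          nlinarith [h2, h6,
            mul_nonneg (mul_nonneg (Real.sqrt_nonneg (1 - u ^ 2)) hγ0.le) hu0]
        have h3 := Real.sqrt_le_sqrt hsle
        rw [Real.sqrt_sq h0] at h3
        linarith
      · push_neg at hu1
        have h1 : 1 - β ^ 2 * u ^ 2 ≤ γ ^ 2 := by
          have h5 : 1 ≤ u ^ 2 := by nlinarith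
          have h6 : β ^ 2 * u ^ 2 = (1 - γ ^ 2) * u ^ 2 := by rw [hβ2]
          nlinarith [mul_le_mul_of_nonneg_left h5 hx.le, h6]
        have h2 : Real.sqrt (1 - β ^ 2 * u ^ 2) ≤ γ * u :=
          calc Real.sqrt (1 - β ^ 2 * u ^ 2) ≤ Real.sqrt (γ ^ 2) :=
                Real.sqrt_le_sqrt h1
            _ = γ := Real.sqrt_sq hγ0.le
            _ ≤ γ * u := by nlinarith
        have := Real.sqrt_nonneg (1 - u ^ 2)
        linarith
    have hFe : F (β • w) = ENNReal.ofReal (Real.sqrt (1 - β ^ 2 * u ^ 2) - γ * u) := by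
      simp only [hF]
      rw [hsq, hqs, ← hu2, ← mul_assoc, haβ]
    rw [hFe, ← hu2]
    exact ENNReal.ofReal_le_ofReal (by linarith)
  -- conclude vol A ≤ β^m * vol B
  have hAB : (volume : Measure ((Fin m → ℝ) × ℝ)) A
      ≤ ENNReal.ofReal (β ^ m) * (volume : Measure ((Fin m → ℝ) × ℝ)) B := by
    calc (volume : Measure ((Fin m → ℝ) × ℝ)) A
        = ENNReal.ofReal (β ^ m) * ∫⁻ w, F (β • w) := by rw [hvolA]; exact hscale
      _ ≤ ENNReal.ofReal (β ^ m) * ∫⁻ w, ENNReal.ofReal (Real.sqrt (1 - q w)) :=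
          mul_le_mul_right (lintegral_mono hpt) _
      _ = ENNReal.ofReal (β ^ m) * volume H := by rw [hvolH]
      _ ≤ ENNReal.ofReal (β ^ m) * volume B :=
          mul_le_mul_right (measure_mono fun p hp => hp.2) _
  -- transfer back
  have hvolK : (volume : Measure (EuclideanSpace ℝ (Fin (m + 1)))) K = volume A := by
    rw [hKA]; exact hΦmp.measure_preimage hAm.nullMeasurableSet
  have hvolball : (volume : Measure (EuclideanSpace ℝ (Fin (m + 1))))
      (Metric.ball 0 1) = volume B := by
    rw [hballB]; exact hΦmp.measure_preimage hBm.nullMeasurableSet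
  -- final assembly
  have hdim : Module.finrank ℝ (EuclideanSpace ℝ (Fin (m + 1))) = m + 1 := by
    simp [finrank_euclideanSpace_fin]
  set V : ENNReal := (volume : Measure (EuclideanSpace ℝ (Fin (m + 1))))
    (Metric.ball 0 1) with hV
  have hV0 : V ≠ 0 := (Metric.measure_ball_pos volume 0 one_pos).ne'
  have hVt : V ≠ ⊤ := measure_ball_lt_top.ne
  set k : ENNReal := ((m + 1 : ℕ) : ENNReal) with hk
  have hsphcap : (volume : Measure (EuclideanSpace ℝ (Fin (m + 1)))).toSphere cap
      ≤ k * (ENNReal.ofReal (β ^ m) * V) := by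
    rw [Measure.toSphere_apply' _ hcapm, hdim]
    refine mul_le_mul_right ?_ _
    calc (volume : Measure (EuclideanSpace ℝ (Fin (m + 1))))
          (Set.Ioo (0 : ℝ) 1 • (Subtype.val '' cap))
        ≤ volume K := measure_mono hcone
      _ = volume A := hvolK
      _ ≤ ENNReal.ofReal (β ^ m) * volume B := hAB
      _ = ENNReal.ofReal (β ^ m) * V := by rw [hvolball]
  have hsphuniv : (volume : Measure (EuclideanSpace ℝ (Fin (m + 1)))).toSphere Set.univ
      = k * V := by
    rw [Measure.toSphere_apply_univ, hdim, hV]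
  have hk0 : k ≠ 0 := by simp [hk]
  have hkt : k ≠ ⊤ := by simp [hk]
  have hbound : μ cap ≤ ENNReal.ofReal (β ^ m) := by
    rw [hμ, Measure.smul_apply, smul_eq_mul, hsphuniv]
    calc (k * V)⁻¹ * (volume : Measure (EuclideanSpace ℝ (Fin (m + 1)))).toSphere cap
        ≤ (k * V)⁻¹ * (k * (ENNReal.ofReal (β ^ m) * V)) :=
          mul_le_mul_right hsphcap _
      _ = ENNReal.ofReal (β ^ m) * ((k * V)⁻¹ * (k * V)) := by ring
      _ = ENNReal.ofReal (β ^ m) := by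
          rw [ENNReal.inv_mul_cancel (mul_ne_zero hk0 hV0)
            (ENNReal.mul_ne_top hkt hVt), mul_one]
  refine le_trans hbound ?_
  have hexp : ((((m : ℕ) + 1 : ℕ) : ℝ) - 1) = (m : ℝ) := by push_cast; ring
  have e1 : (2 : ℝ) ^ ((1 / 2 : ℝ) * Real.logb 2 (1 - γ ^ 2)) = β := by
    rw [mul_comm, Real.rpow_mul (by norm_num : (0:ℝ) ≤ 2),
      Real.rpow_logb (by norm_num) (by norm_num) hx, hβ, ← Real.sqrt_eq_rpow]
  have e2 : (2 : ℝ) ^ ((m : ℝ) * ((1 / 2 : ℝ) * Real.logb 2 (1 - γ ^ 2))) = β ^ m := by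
    rw [mul_comm ((m : ℝ)), Real.rpow_mul (by norm_num : (0:ℝ) ≤ 2), e1,
      Real.rpow_natCast]
  rw [hexp, e2]
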